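/- Assume ρ > 0 on U and that the continuity equation ∂_t ρ + div_x(ρ ṽ) + ρ ∂_z w(x̃, z, t) = R holds for every (x̃, t) ∈ U and every z with z⁻(x̃,t) ≤ z ≤ z⁺(x̃,t). Then the layer-integrated mass balance holds: ∂_t(ρ h) + div_x(ρ h ṽ) = G⁺ − G⁻ + h R on U, where G⁺ := ρ (∂_t z⁺ + ṽ · ∇_x z⁺ − w(·, z⁺, ·)) and G⁻ := ρ (∂_t z⁻ + ṽ · ∇_x z⁻ − w(·, z⁻, ·)) are the normal mass fluxes at the top and bottom interfaces of the layer. -/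

import Mathlib

/-- Partial derivative with respect to time of a scalar field on horizontal
space-time `ℝ² × ℝ`. -/
noncomputable def pdt2 (f : ((Fin 2 → ℝ) × ℝ) → ℝ) (p : (Fin 2 → ℝ) × ℝ) : ℝ :=
  fderiv ℝ f p (0, 1)

/-- Divergence in the two horizontal variables of a vector field on `ℝ² × ℝ`. -/
noncomputable def div2 (V : ((Fin 2 → ℝ) × ℝ) → Fin 2 → ℝ) (p : (Fin 2 → ℝ) × ℝ) : ℝ :=
  ∑ k : Fin 2, fderiv ℝ (fun q => V q k) p ((Pi.single k 1 : Fin 2 → ℝ), (0 : ℝ))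

/-- Gradient in the two horizontal variables of a scalar field on `ℝ² × ℝ`. -/
noncomputable def gradx2 (f : ((Fin 2 → ℝ) × ℝ) → ℝ) (p : (Fin 2 → ℝ) × ℝ) : Fin 2 → ℝ :=
  fun k => fderiv ℝ f p ((Pi.single k 1 : Fin 2 → ℝ), (0 : ℝ))

/-- On an open set `U` of horizontal space-time points `(x̃, t)`, with differentiable
interfaces `zm < zp`, layer thickness `h = zp - zm`, differentiable layer density `ρ`
and horizontal velocity `ṽ` (independent of `z`), reaction term `R`, and vertical
velocity `w(x̃, z, t)` differentiable in `z` on `[zm, zp]`: if `ρ > 0` on `U` and the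
continuity equation `∂ₜ ρ + div_x(ρ ṽ) + ρ ∂_z w = R` holds for every `(x̃, t) ∈ U`
and every `z ∈ [zm, zp]`, then the layer-integrated mass balance
`∂ₜ(ρ h) + div_x(ρ h ṽ) = G⁺ - G⁻ + h R` holds on `U`, where
`G⁺ = ρ (∂ₜ zp + ṽ · ∇_x zp - w(·, zp, ·))` and
`G⁻ = ρ (∂ₜ zm + ṽ · ∇_x zm - w(·, zm, ·))`. -/
theorem layer_integrated_mass_balance
    (U : Set ((Fin 2 → ℝ) × ℝ)) (hU : IsOpen U)
    (zm zp : ((Fin 2 → ℝ) × ℝ) → ℝ)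
    (hzm : DifferentiableOn ℝ zm U) (hzp : DifferentiableOn ℝ zp U)
    (hzlt : ∀ p ∈ U, zm p < zp p)
    (ρ : ((Fin 2 → ℝ) × ℝ) → ℝ) (vh : ((Fin 2 → ℝ) × ℝ) → Fin 2 → ℝ)
    (hρd : DifferentiableOn ℝ ρ U) (hvd : DifferentiableOn ℝ vh U)
    (R : ((Fin 2 → ℝ) × ℝ) → ℝ)
    (w : (Fin 2 → ℝ) → ℝ → ℝ → ℝ)
    (hw : ∀ p ∈ U, DifferentiableOn ℝ (fun z => w p.1 z p.2) (Set.Icc (zm p) (zp p)))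
    (hρpos : ∀ p ∈ U, 0 < ρ p)
    (hcont : ∀ p ∈ U, ∀ z ∈ Set.Icc (zm p) (zp p),
      pdt2 ρ p + div2 (fun q => ρ q • vh q) p
        + ρ p * derivWithin (fun ζ => w p.1 ζ p.2) (Set.Icc (zm p) (zp p)) z = R p) :
    ∀ p ∈ U,
      pdt2 (fun q => ρ q * (zp q - zm q)) p
        + div2 (fun q => (ρ q * (zp q - zm q)) • vh q) p
      = ρ p * (pdt2 zp p + (∑ k, vh p k * gradx2 zp p k) - w p.1 (zp p) p.2)
        - ρ p * (pdt2 zm p + (∑ k, vh p k * gradx2 zm p k) - w p.1 (zm p) p.2)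
        + (zp p - zm p) * R p := by
  intro p hp
  have hmem : U ∈ nhds p := hU.mem_nhds hp
  have hρa : DifferentiableAt ℝ ρ p := (hρd p hp).differentiableAt hmem
  have hzma : DifferentiableAt ℝ zm p := (hzm p hp).differentiableAt hmem
  have hzpa : DifferentiableAt ℝ zp p := (hzp p hp).differentiableAt hmem
  have hha : DifferentiableAt ℝ (fun q => zp q - zm q) p := hzpa.sub hzma
  have hva : ∀ k, DifferentiableAt ℝ (fun q => vh q k) p := fun k =>
    differentiableAt_pi.mp ((hvd p hp).differentiableAt hmem) k
  have hρha : DifferentiableAt ℝ (fun q => ρ q * (zp q - zm q)) p := hρa.mul hha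
  have hρp : 0 < ρ p := hρpos p hp
  have hlt : zm p < zp p := hzlt p hp
  have hmul : ∀ (f g : ((Fin 2 → ℝ) × ℝ) → ℝ), DifferentiableAt ℝ f p →
      DifferentiableAt ℝ g p → ∀ v,
      fderiv ℝ (fun q => f q * g q) p v
        = f p * fderiv ℝ g p v + g p * fderiv ℝ f p v := by
    intro f g hf hg v
    rw [fderiv_fun_mul hf hg]
    simp
  have hsub : ∀ v, fderiv ℝ (fun q => zp q - zm q) p v
      = fderiv ℝ zp p v - fderiv ℝ zm p v := by
    intro v; rw [fderiv_fun_sub hzpa hzma]; simp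
  -- the continuity equation makes ∂_z w constant in z
  set A : ℝ := pdt2 ρ p + div2 (fun q => ρ q • vh q) p with hA
  set c : ℝ := (R p - A) / ρ p with hc
  have hw' := hw p hp
  have hdc : ∀ z ∈ Set.Icc (zm p) (zp p),
      derivWithin (fun ζ => w p.1 ζ p.2) (Set.Icc (zm p) (zp p)) z = c := by
    intro z hz
    have h1 := hcont p hp z hz
    have : ρ p * derivWithin (fun ζ => w p.1 ζ p.2) (Set.Icc (zm p) (zp p)) z
        = R p - A := by rw [hA]; linarith
    rw [hc, eq_div_iff hρp.ne']
    linarith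
  have hud : UniqueDiffOn ℝ (Set.Icc (zm p) (zp p)) := uniqueDiffOn_Icc hlt
  have key : w p.1 (zp p) p.2 - w p.1 (zm p) p.2 = c * (zp p - zm p) := by
    have hgd : DifferentiableOn ℝ (fun z => w p.1 z p.2 - c * z)
        (Set.Icc (zm p) (zp p)) :=
      hw'.sub ((differentiable_id.const_mul c).differentiableOn)
    have hg0 : ∀ z ∈ Set.Ico (zm p) (zp p),
        derivWithin (fun z => w p.1 z p.2 - c * z) (Set.Icc (zm p) (zp p)) z = 0 := by
      intro z hz
      have hz' : z ∈ Set.Icc (zm p) (zp p) := Set.Ico_subset_Icc_self hz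
      have h1 : HasDerivWithinAt (fun ζ => w p.1 ζ p.2) c (Set.Icc (zm p) (zp p)) z := by
        have := (hw' z hz').hasDerivWithinAt
        rwa [hdc z hz'] at this
      have h2 : HasDerivWithinAt (fun ζ : ℝ => c * ζ) c (Set.Icc (zm p) (zp p)) z := by
        simpa using ((hasDerivAt_id z).const_mul c).hasDerivWithinAt (s := Set.Icc (zm p) (zp p))
      exact ((h1.sub h2).derivWithin (hud z hz')).trans (sub_self c)
    have := constant_of_derivWithin_zero hgd hg0 (zp p) (Set.mem_Icc.mpr ⟨hlt.le, le_refl _⟩)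
    linarith
  have keyρ : ρ p * (w p.1 (zp p) p.2 - w p.1 (zm p) p.2) = (R p - A) * (zp p - zm p) := by
    rw [key, hc]; field_simp
  -- expand the derivatives
  have eA : A = fderiv ℝ ρ p (0, 1)
      + ((ρ p * fderiv ℝ (fun q => vh q 0) p (Pi.single 0 1, 0)
          + vh p 0 * fderiv ℝ ρ p (Pi.single 0 1, 0))
        + (ρ p * fderiv ℝ (fun q => vh q 1) p (Pi.single 1 1, 0)
          + vh p 1 * fderiv ℝ ρ p (Pi.single 1 1, 0))) := by
    rw [hA]
    simp only [pdt2, div2, Pi.smul_apply, smul_eq_mul, Fin.sum_univ_two]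
    rw [hmul _ _ hρa (hva 0), hmul _ _ hρa (hva 1)]
  simp only [pdt2, div2, gradx2, Pi.smul_apply, smul_eq_mul, Fin.sum_univ_two]
  rw [hmul _ _ hρa hha, hmul _ _ hρha (hva 0), hmul _ _ hρha (hva 1),
    hmul _ _ hρa hha, hmul _ _ hρa hha, hsub, hsub, hsub]
  rw [eA] at keyρ
  linear_combination keyρ
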